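/- Let m ≥ 1 and D ≥ 2 be integers and α_1,…,α_{D−1} reals with 1 ≤ α_k ≤ m. Then the maximal value of the ratio c(τ)/T(τ) over τ ∈ (ℝ_{>0})^D is attained at τ̃ = (τ̃_0,…,τ̃_{D−1}) given by τ̃_0 = (1/(m+1))·ln((m+1)T̃ + 1) and τ̃_k = (1/α_k)·ln((mT̃ + 1)/((m − α_k)T̃ + 1)) for k ∈ {1,…,D−1}, where T̃ = T(τ̃) is the unique positive solution of the equation e^T = ((m+1)T + 1)^{1/(m+1)} · Π_{k=1}^{D−1} ((mT + 1)/((m − α_k)T + 1))^{1/α_k}. -/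

import Mathlib

/-- `c₀(τ) = (1/(m+1))(1 - e^{-(m+1)τ})` and, for `k ≥ 1`,
`c_k(τ) = e^{-mτ}(e^{α_k τ} - 1)`. -/
noncomputable def cfun (m : ℕ) (α : ℕ → ℝ) (k : ℕ) (τ : ℝ) : ℝ :=
  if k = 0 then (1 / ((m : ℝ) + 1)) * (1 - Real.exp (-((m : ℝ) + 1) * τ))
  else Real.exp (-(m : ℝ) * τ) * (Real.exp (α k * τ) - 1)

/-- `c(τ) = ∏_{k=0}^{D-1} c_k(τ_k)`. -/
noncomputable def cprod (m D : ℕ) (α : ℕ → ℝ) (τ : ℕ → ℝ) : ℝ :=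
  ∏ k ∈ Finset.range D, cfun m α k (τ k)

/-- `T(τ) = ∑_{k=0}^{D-1} τ_k`. -/
def Tsum (D : ℕ) (τ : ℕ → ℝ) : ℝ :=
  ∑ k ∈ Finset.range D, τ k

lemma expx (x : ℝ) (hx : 0 < x) : 0 < x * Real.exp x - Real.exp x + 1 := by
  have h := Real.add_one_lt_exp (x := -x) (by linarith)
  rw [Real.exp_neg] at h
  have he := Real.exp_pos x
  have : (-x + 1) * Real.exp x < 1 := by
    calc (-x + 1) * Real.exp x < (Real.exp x)⁻¹ * Real.exp x :=
          mul_lt_mul_of_pos_right h he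
      _ = 1 := inv_mul_cancel₀ he.ne'
  nlinarith

lemma rmono : StrictMonoOn (fun x => (Real.exp x - 1) / x) (Set.Ioi 0) := by
  have hd : ∀ x ∈ Set.Ioi (0:ℝ), HasDerivAt (fun x => (Real.exp x - 1) / x)
      ((Real.exp x * x - (Real.exp x - 1) * 1) / x ^ 2) x := by
    intro x hx
    exact ((Real.hasDerivAt_exp x).sub_const 1).div (hasDerivAt_id x) (ne_of_gt hx)
  apply strictMonoOn_of_deriv_pos (convex_Ioi 0)
  · intro x hx
    exact ((hd x hx).continuousAt).continuousWithinAt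
  · intro x hx
    rw [interior_Ioi] at hx
    rw [(hd x hx).deriv]
    have h2 : (0:ℝ) < x ^ 2 := pow_pos hx 2
    have h3 : 0 < Real.exp x * x - (Real.exp x - 1) * 1 := by nlinarith [expx x hx]
    exact div_pos h3 h2

lemma exp_sub_one_pos {x : ℝ} (hx : 0 < x) : 0 < Real.exp x - 1 := by
  nlinarith [Real.add_one_lt_exp (ne_of_gt hx)]

lemma qanti : StrictAntiOn (fun x => x / (Real.exp x - 1)) (Set.Ioi 0) := by
  intro a ha b hb hab
  simp only
  have ha' : (0:ℝ) < a := ha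
  have hb' : (0:ℝ) < b := hb
  have h1 := rmono ha hb hab
  simp only at h1
  have hpa : 0 < (Real.exp a - 1) / a := div_pos (exp_sub_one_pos ha') ha'
  rw [show b / (Real.exp b - 1) = ((Real.exp b - 1) / b)⁻¹ by
        field_simp,
      show a / (Real.exp a - 1) = ((Real.exp a - 1) / a)⁻¹ by
        field_simp]
  exact inv_strictAnti₀ hpa h1

/-- Generic 1-d maximality lemma. -/
lemma key (h h' : ℝ → ℝ) (hd : ∀ t, 0 < t → HasDerivAt h (h' t) t)
    (hP : StrictAntiOn (fun t => t * h' t) (Set.Ioi 0))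
    (t0 : ℝ) (ht0 : 0 < t0) (w : ℝ) (hw : w = t0 * h' t0)
    (t : ℝ) (ht : 0 < t) :
    h t - w * Real.log t ≤ h t0 - w * Real.log t0 := by
  set φ : ℝ → ℝ := fun x => h x - w * Real.log x with hφ
  have hdφ : ∀ x, 0 < x → HasDerivAt φ (h' x - w * x⁻¹) x := by
    intro x hx
    exact (hd x hx).sub ((Real.hasDerivAt_log (ne_of_gt hx)).const_mul w)
  rcases lt_trichotomy t t0 with hlt | heqc | hgt
  · -- φ strictly increasing on Icc t t0
    have : StrictMonoOn φ (Set.Icc t t0) := by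
      apply strictMonoOn_of_deriv_pos (convex_Icc t t0)
      · intro x hx
        exact ((hdφ x (lt_of_lt_of_le ht hx.1)).continuousAt).continuousWithinAt
      · intro x hx
        rw [interior_Icc] at hx
        have hx0 : 0 < x := lt_trans ht hx.1
        rw [(hdφ x hx0).deriv]
        have h5 := hP (Set.mem_Ioi.mpr hx0) (Set.mem_Ioi.mpr ht0) hx.2
        simp only at h5
        rw [← hw] at h5
        have h6 : w * x⁻¹ < h' x := by
          rw [mul_inv_lt_iff₀ hx0]
          linarith [h5]
        linarith
    exact le_of_lt (this (Set.mem_Icc.mpr ⟨le_refl t, le_of_lt hlt⟩)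
      (Set.mem_Icc.mpr ⟨le_of_lt hlt, le_refl t0⟩) hlt)
  · rw [heqc]
  · -- φ strictly decreasing on Icc t0 t
    have : StrictAntiOn φ (Set.Icc t0 t) := by
      apply strictAntiOn_of_deriv_neg (convex_Icc t0 t)
      · intro x hx
        exact ((hdφ x (lt_of_lt_of_le ht0 hx.1)).continuousAt).continuousWithinAt
      · intro x hx
        rw [interior_Icc] at hx
        have hx0 : 0 < x := lt_trans ht0 hx.1
        rw [(hdφ x hx0).deriv]
        have h5 := hP (Set.mem_Ioi.mpr ht0) (Set.mem_Ioi.mpr hx0) hx.1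
        simp only at h5
        rw [← hw] at h5
        have h6 : h' x < w * x⁻¹ := by
          rw [lt_mul_inv_iff₀ hx0]
          linarith [h5]
        linarith
    exact le_of_lt (this (Set.mem_Icc.mpr ⟨le_refl t0, le_of_lt hgt⟩)
      (Set.mem_Icc.mpr ⟨le_of_lt hgt, le_refl t⟩) hgt)

lemma case0 (M T t0 : ℝ) (hM : 0 < M + 1) (hT : 0 < T) (ht0pos : 0 < t0)
    (hE : Real.exp ((M+1) * t0) = (M+1)*T + 1)
    (t : ℝ) (ht : 0 < t) :
    1 - Real.exp (-(M+1)*t) ≤ (1 - Real.exp (-(M+1)*t0)) * (t/t0) ^ (t0/T) := by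
  set h : ℝ → ℝ := fun x => Real.log (1 - Real.exp (-(M+1)*x)) with hh
  set h' : ℝ → ℝ := fun x =>
    (M+1) * Real.exp (-(M+1)*x) / (1 - Real.exp (-(M+1)*x)) with hh'
  have gpos : ∀ x : ℝ, 0 < x → 0 < 1 - Real.exp (-(M+1)*x) := by
    intro x hx
    have : Real.exp (-(M+1)*x) < 1 := by
      rw [Real.exp_lt_one_iff]
      nlinarith
    linarith
  have hd : ∀ x : ℝ, 0 < x → HasDerivAt h (h' x) x := by
    intro x hx
    have d1 : HasDerivAt (fun x : ℝ => -(M+1)*x) (-(M+1)) x := by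
      simpa using (hasDerivAt_id x).const_mul (-(M+1))
    have d2 := d1.exp
    have d3 := d2.const_sub 1
    have d4 := d3.log (ne_of_gt (gpos x hx))
    convert d4 using 1
    simp only [hh']
    ring
  have ident : ∀ x : ℝ, 0 < x →
      x * h' x = ((M+1)*x) / (Real.exp ((M+1)*x) - 1) := by
    intro x hx
    have hEx : Real.exp (-(M+1)*x) = (Real.exp ((M+1)*x))⁻¹ := by
      rw [← Real.exp_neg]; ring_nf
    have hgt : 0 < Real.exp ((M+1)*x) - 1 := exp_sub_one_pos (by nlinarith)
    simp only [hh', hEx]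
    have hne : Real.exp ((M+1)*x) ≠ 0 := (Real.exp_pos _).ne'
    field_simp
  have hP : StrictAntiOn (fun x => x * h' x) (Set.Ioi 0) := by
    intro a ha b hb hab
    simp only
    rw [ident a ha, ident b hb]
    have := qanti (Set.mem_Ioi.mpr (by nlinarith [Set.mem_Ioi.mp ha] : (0:ℝ) < (M+1)*a))
      (Set.mem_Ioi.mpr (by nlinarith [Set.mem_Ioi.mp hb] : (0:ℝ) < (M+1)*b))
      (by nlinarith [Set.mem_Ioi.mp ha] : (M+1)*a < (M+1)*b)
    simpa using this
  have hw : t0 / T = t0 * h' t0 := by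
    rw [ident t0 ht0pos, hE]
    have : (M+1)*T + 1 - 1 = (M+1)*T := by ring
    rw [this]
    field_simp
  have hkey := key h h' hd hP t0 ht0pos (t0/T) hw t ht
  -- exponentiate
  have e1 : 1 - Real.exp (-(M+1)*t) = Real.exp (h t) := (Real.exp_log (gpos t ht)).symm
  have e2 : 1 - Real.exp (-(M+1)*t0) = Real.exp (h t0) := (Real.exp_log (gpos t0 ht0pos)).symm
  rw [e1, e2, Real.rpow_def_of_pos (div_pos ht ht0pos), ← Real.exp_add]
  apply Real.exp_le_exp.mpr
  rw [Real.log_div (ne_of_gt ht) (ne_of_gt ht0pos)]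
  nlinarith [hkey]

lemma casek (M A T t0 : ℝ) (hA1 : 1 ≤ A) (hAM : A ≤ M) (hT : 0 < T) (ht0pos : 0 < t0)
    (hE : Real.exp (A * t0) = (M*T+1)/((M-A)*T+1))
    (t : ℝ) (ht : 0 < t) :
    Real.exp (-M*t) * (Real.exp (A*t) - 1) ≤
      Real.exp (-M*t0) * (Real.exp (A*t0) - 1) * (t/t0) ^ (t0/T) := by
  have hA0 : 0 < A := by linarith
  have hB : 0 < (M-A)*T + 1 := by nlinarith
  set h : ℝ → ℝ := fun x => -M*x + Real.log (Real.exp (A*x) - 1) with hh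
  set h' : ℝ → ℝ := fun x =>
    -M + A * Real.exp (A*x) / (Real.exp (A*x) - 1) with hh'
  have gpos : ∀ x : ℝ, 0 < x → 0 < Real.exp (A*x) - 1 := by
    intro x hx
    exact exp_sub_one_pos (by nlinarith)
  have hd : ∀ x : ℝ, 0 < x → HasDerivAt h (h' x) x := by
    intro x hx
    have d1 : HasDerivAt (fun x : ℝ => A*x) A x := by
      simpa using (hasDerivAt_id x).const_mul A
    have d2 := (d1.exp.sub_const 1).log (ne_of_gt (gpos x hx))
    have d3 : HasDerivAt (fun x : ℝ => -M*x) (-M) x := by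
      simpa using (hasDerivAt_id x).const_mul (-M)
    have := d3.fun_add d2
    refine this.congr_deriv ?_
    ring
  have ident : ∀ x : ℝ, 0 < x →
      x * h' x = (A - M)*x + (A*x) / (Real.exp (A*x) - 1) := by
    intro x hx
    have := gpos x hx
    have hne : Real.exp (x*A) - 1 ≠ 0 := by rw [mul_comm]; exact this.ne'
    simp only [hh']
    field_simp
    ring
  have hP : StrictAntiOn (fun x => x * h' x) (Set.Ioi 0) := by
    intro a ha b hb hab
    simp only
    rw [ident a ha, ident b hb]
    have ha' : (0:ℝ) < a := ha
    have hb' : (0:ℝ) < b := hb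
    have hq := qanti (Set.mem_Ioi.mpr (by nlinarith : (0:ℝ) < A*a))
      (Set.mem_Ioi.mpr (by nlinarith : (0:ℝ) < A*b))
      (by nlinarith : A*a < A*b)
    simp only at hq
    nlinarith [hq]
  have hw : t0 / T = t0 * h' t0 := by
    rw [ident t0 ht0pos]
    have hR : Real.exp (A*t0) - 1 = A*T/((M-A)*T+1) := by
      have hBne : T * (M - A) + 1 ≠ 0 := by rw [mul_comm]; exact hB.ne'
      rw [hE]; field_simp; ring
    rw [hR]
    field_simp
    ring
  have hkey := key h h' hd hP t0 ht0pos (t0/T) hw t ht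
  have e1 : Real.exp (-M*t) * (Real.exp (A*t) - 1) = Real.exp (h t) := by
    rw [hh]; simp only
    rw [Real.exp_add, Real.exp_log (gpos t ht)]
  have e2 : Real.exp (-M*t0) * (Real.exp (A*t0) - 1) = Real.exp (h t0) := by
    rw [hh]; simp only
    rw [Real.exp_add, Real.exp_log (gpos t0 ht0pos)]
  rw [e1, e2, Real.rpow_def_of_pos (div_pos ht ht0pos), ← Real.exp_add]
  apply Real.exp_le_exp.mpr
  rw [Real.log_div (ne_of_gt ht) (ne_of_gt ht0pos)]
  nlinarith [hkey]

lemma uniq (M : ℝ) (hM : 1 ≤ M) (s : Finset ℕ) (α : ℕ → ℝ)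
    (hα : ∀ k ∈ s, 1 ≤ α k ∧ α k ≤ M)
    (a b : ℝ) (ha : 0 < a) (hab : a < b)
    (hga : (1/(M+1)) * Real.log ((M+1)*a+1) +
      ∑ k ∈ s, (1/α k) * (Real.log (M*a+1) - Real.log ((M - α k)*a+1)) = a)
    (hgb : (1/(M+1)) * Real.log ((M+1)*b+1) +
      ∑ k ∈ s, (1/α k) * (Real.log (M*b+1) - Real.log ((M - α k)*b+1)) = b) :
    False := by
  have hM1 : (0:ℝ) < M + 1 := by linarith
  set G : ℝ → ℝ := fun T => (1/(M+1)) * Real.log ((M+1)*T+1) +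
      ∑ k ∈ s, (1/α k) * (Real.log (M*T+1) - Real.log ((M - α k)*T+1)) - T with hG
  set G' : ℝ → ℝ := fun T => (1/(M+1)) * ((M+1)/((M+1)*T+1)) +
      ∑ k ∈ s, (1/α k) * (M/(M*T+1) - (M - α k)/((M - α k)*T+1)) - 1 with hG'
  have hpos : ∀ x : ℝ, 0 ≤ x → 0 < (M+1)*x+1 ∧ 0 < M*x+1 ∧
      ∀ k ∈ s, 0 < (M - α k)*x+1 := by
    intro x hx
    refine ⟨by nlinarith, by nlinarith, fun k hk => ?_⟩
    have := hα k hk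
    nlinarith [this.1, this.2]
  have hd : ∀ x : ℝ, 0 ≤ x → HasDerivAt G (G' x) x := by
    intro x hx
    obtain ⟨h1, h2, h3⟩ := hpos x hx
    have d1 : HasDerivAt (fun T : ℝ => Real.log ((M+1)*T+1)) ((M+1)/((M+1)*x+1)) x := by
      have := (((hasDerivAt_id x).const_mul (M+1)).add_const 1).log (ne_of_gt h1)
      simpa using this
    have d2 : HasDerivAt (fun T : ℝ => Real.log (M*T+1)) (M/(M*x+1)) x := by
      have := (((hasDerivAt_id x).const_mul M).add_const 1).log (ne_of_gt h2)
      simpa using this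
    have d3 : ∀ k ∈ s, HasDerivAt (fun T : ℝ =>
        (1/α k) * (Real.log (M*T+1) - Real.log ((M - α k)*T+1)))
        ((1/α k) * (M/(M*x+1) - (M - α k)/((M - α k)*x+1))) x := by
      intro k hk
      have d4 : HasDerivAt (fun T : ℝ => Real.log ((M - α k)*T+1))
          ((M - α k)/((M - α k)*x+1)) x := by
        have := (((hasDerivAt_id x).const_mul (M - α k)).add_const 1).log
          (ne_of_gt (h3 k hk))
        simpa using this
      exact ((d2.sub d4).const_mul _)
    have dsum := HasDerivAt.fun_sum d3
    exact (((d1.const_mul (1/(M+1))).add dsum).sub (hasDerivAt_id x))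
  have hanti : StrictAntiOn (deriv G) (Set.Ioi 0) := by
    intro u hu v hv huv
    have hu' : (0:ℝ) < u := hu
    have hv' : (0:ℝ) < v := hv
    rw [(hd u hu'.le).deriv, (hd v hv'.le).deriv]
    obtain ⟨hu1, hu2, hu3⟩ := hpos u hu'.le
    obtain ⟨hv1, hv2, hv3⟩ := hpos v hv'.le
    simp only [hG']
    have hfirst : (M+1)/((M+1)*v+1) < (M+1)/((M+1)*u+1) := by
      apply div_lt_div_of_pos_left hM1 hu1
      nlinarith
    have hsum : ∀ k ∈ s, (1/α k) * (M/(M*v+1) - (M - α k)/((M - α k)*v+1)) ≤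
        (1/α k) * (M/(M*u+1) - (M - α k)/((M - α k)*u+1)) := by
      intro k hk
      obtain ⟨hk1, hk2⟩ := hα k hk
      have hk0 : (0:ℝ) < α k := by linarith
      have hu3' := hu3 k hk
      have hv3' := hv3 k hk
      have hne1 := hu2.ne'
      have hne2 : u * (M - α k) + 1 ≠ 0 := by rw [mul_comm]; exact hu3'.ne'
      have hne3 := hv2.ne'
      have hne4 : v * (M - α k) + 1 ≠ 0 := by rw [mul_comm]; exact hv3'.ne'
      have hne5 := hk0.ne'
      have idu : (1/α k) * (M/(M*u+1) - (M - α k)/((M - α k)*u+1)) =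
          1 / ((M*u+1) * ((M - α k)*u+1)) := by
        field_simp
        ring
      have idv : (1/α k) * (M/(M*v+1) - (M - α k)/((M - α k)*v+1)) =
          1 / ((M*v+1) * ((M - α k)*v+1)) := by
        field_simp
        ring
      rw [idu, idv]
      apply one_div_le_one_div_of_le (by positivity)
      have hMA : (0:ℝ) ≤ M - α k := by linarith
      have e1 : M*u+1 ≤ M*v+1 := by nlinarith
      have e2 : (M - α k)*u+1 ≤ (M - α k)*v+1 := by nlinarith
      exact mul_le_mul e1 e2 hu3'.le (by nlinarith)
    have hsum' := Finset.sum_le_sum hsum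
    have hfirst' := mul_lt_mul_of_pos_left hfirst (by positivity : (0:ℝ) < 1/(M+1))
    linarith
  -- Rolle twice
  have hG0 : G 0 = 0 := by
    simp [hG]
  have hGa : G a = 0 := by
    simp only [hG]
    linarith [hga]
  have hGb : G b = 0 := by
    simp only [hG]
    linarith [hgb]
  have hcont : ∀ x y : ℝ, 0 ≤ x → ContinuousOn G (Set.Icc x y) := by
    intro x y hx
    intro z hz
    exact (hd z (le_trans hx hz.1)).continuousAt.continuousWithinAt
  obtain ⟨c, hc, hc0⟩ := exists_deriv_eq_zero ha (hcont 0 a le_rfl) (by rw [hG0, hGa])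
  obtain ⟨d, hdm, hd0⟩ := exists_deriv_eq_zero hab (hcont a b ha.le) (by rw [hGa, hGb])
  have := hanti (Set.mem_Ioi.mpr hc.1) (Set.mem_Ioi.mpr (lt_trans ha hdm.1))
    (lt_trans hc.2 hdm.1)
  rw [hc0, hd0] at this
  exact lt_irrefl 0 this


/-- Proposition 12: the maximum of `c(τ)/T(τ)` over `τ ∈ (ℝ>0)^D` is attained at the
point `τ̃` given by `τ̃₀ = (1/(m+1)) ln((m+1)T̃+1)` and
`τ̃_k = (1/α_k) ln((mT̃+1)/((m-α_k)T̃+1))`, where `T̃ = T(τ̃)` is the unique positive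
solution of `e^T = ((m+1)T+1)^{1/(m+1)} ∏_k ((mT+1)/((m-α_k)T+1))^{1/α_k}`. -/
theorem stmt10 (m D : ℕ) (hm : 1 ≤ m) (hD : 2 ≤ D)
    (α : ℕ → ℝ) (hα : ∀ k ∈ Finset.Icc 1 (D - 1), 1 ≤ α k ∧ α k ≤ (m : ℝ))
    (Tt : ℝ) (hTt : 0 < Tt)
    (heq : Real.exp Tt = (((m : ℝ) + 1) * Tt + 1) ^ (1 / ((m : ℝ) + 1)) *
      ∏ k ∈ Finset.Icc 1 (D - 1),
        (((m : ℝ) * Tt + 1) / (((m : ℝ) - α k) * Tt + 1)) ^ (1 / α k))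
    (τt : ℕ → ℝ)
    (hτ0 : τt 0 = (1 / ((m : ℝ) + 1)) * Real.log (((m : ℝ) + 1) * Tt + 1))
    (hτk : ∀ k ∈ Finset.Icc 1 (D - 1),
      τt k = (1 / α k) * Real.log (((m : ℝ) * Tt + 1) / (((m : ℝ) - α k) * Tt + 1))) :
    (∀ T' : ℝ, 0 < T' →
      Real.exp T' = (((m : ℝ) + 1) * T' + 1) ^ (1 / ((m : ℝ) + 1)) *
        ∏ k ∈ Finset.Icc 1 (D - 1),
          (((m : ℝ) * T' + 1) / (((m : ℝ) - α k) * T' + 1)) ^ (1 / α k) → T' = Tt) ∧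
    Tsum D τt = Tt ∧ (∀ k < D, 0 < τt k) ∧
    ∀ τ : ℕ → ℝ, (∀ k < D, 0 < τ k) →
      cprod m D α τ / Tsum D τ ≤ cprod m D α τt / Tsum D τt := by

  set M : ℝ := (m : ℝ) with hMdef
  have hM : (1:ℝ) ≤ M := by rw [hMdef]; exact_mod_cast hm
  have hM1 : (0:ℝ) < M + 1 := by linarith
  set s : Finset ℕ := Finset.Icc 1 (D - 1) with hsdef
  -- splitting of range D
  have hins : Finset.range D = insert 0 s := by
    ext x
    simp only [Finset.mem_range, Finset.mem_insert, hsdef, Finset.mem_Icc]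
    omega
  have h0s : 0 ∉ s := by simp [hsdef]
  have hsplit : ∀ f : ℕ → ℝ, ∑ k ∈ Finset.range D, f k = f 0 + ∑ k ∈ s, f k := by
    intro f; rw [hins, Finset.sum_insert h0s]
  have hsplitp : ∀ f : ℕ → ℝ, ∏ k ∈ Finset.range D, f k = f 0 * ∏ k ∈ s, f k := by
    intro f; rw [hins, Finset.prod_insert h0s]
  -- positivity of various quantities (generic T)
  have hposgen : ∀ T : ℝ, 0 < T → 0 < (M+1)*T+1 ∧ 0 < M*T+1 ∧
      ∀ k ∈ s, (0 < (M - α k)*T+1 ∧ (M - α k)*T+1 < M*T+1) := by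
    intro T hT
    refine ⟨by nlinarith, by nlinarith, fun k hk => ?_⟩
    obtain ⟨h1, h2⟩ := hα k hk
    constructor <;> nlinarith
  -- converting the equation to a sum identity
  have hform : ∀ T : ℝ, 0 < T →
      Real.exp T = ((M + 1) * T + 1) ^ (1 / (M + 1)) *
        ∏ k ∈ s, ((M * T + 1) / ((M - α k) * T + 1)) ^ (1 / α k) →
      (1/(M+1)) * Real.log ((M+1)*T+1) +
        ∑ k ∈ s, (1/α k) * (Real.log (M*T+1) - Real.log ((M - α k)*T+1)) = T := by
    intro T hT heqT
    obtain ⟨hA, hN, hB⟩ := hposgen T hT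
    have hrat : ∀ k ∈ s, (0:ℝ) < (M*T+1) / ((M - α k)*T+1) := by
      intro k hk
      exact div_pos hN (hB k hk).1
    have hprodpos : (0:ℝ) < ∏ k ∈ s, ((M * T + 1) / ((M - α k) * T + 1)) ^ (1 / α k) := by
      apply Finset.prod_pos
      intro k hk
      exact Real.rpow_pos_of_pos (hrat k hk) _
    have := congrArg Real.log heqT
    rw [Real.log_exp, Real.log_mul (by positivity) hprodpos.ne',
      Real.log_rpow hA, Real.log_prod
        (fun k hk => (Real.rpow_pos_of_pos (hrat k hk) _).ne')] at this
    have hsum2 : ∑ k ∈ s, Real.log (((M * T + 1) / ((M - α k) * T + 1)) ^ (1 / α k)) =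
        ∑ k ∈ s, (1/α k) * (Real.log (M*T+1) - Real.log ((M - α k)*T+1)) := by
      apply Finset.sum_congr rfl
      intro k hk
      rw [Real.log_rpow (hrat k hk), Real.log_div hN.ne' (hB k hk).1.ne']
    rw [hsum2] at this
    linarith [this]
  have hTteq := hform Tt hTt heq
  -- facts at Tt
  obtain ⟨hA, hN, hB⟩ := hposgen Tt hTt
  have hA1 : (1:ℝ) < (M+1)*Tt+1 := by nlinarith
  -- τt expressions
  have hτsum : τt 0 + ∑ k ∈ s, τt k = Tt := by
    rw [hτ0]
    rw [show ∑ k ∈ s, τt k =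
        ∑ k ∈ s, (1/α k) * (Real.log (M*Tt+1) - Real.log ((M - α k)*Tt+1)) from
      Finset.sum_congr rfl fun k hk => by
        rw [hτk k hk, Real.log_div hN.ne' (hB k hk).1.ne']]
    exact hTteq
  have hTsum : Tsum D τt = Tt := by
    rw [Tsum, hsplit]; exact hτsum
  -- positivity of τt
  have hτt0pos : 0 < τt 0 := by
    rw [hτ0]
    have := Real.log_pos hA1
    positivity
  have hτtkpos : ∀ k ∈ s, 0 < τt k := by
    intro k hk
    obtain ⟨hα1, hα2⟩ := hα k hk
    rw [hτk k hk]
    have h1 : (1:ℝ) < (M*Tt+1) / ((M - α k)*Tt+1) :=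
      (one_lt_div (hB k hk).1).mpr (hB k hk).2
    have := Real.log_pos h1
    have hα0 : (0:ℝ) < α k := by linarith
    positivity
  have hτtpos : ∀ k < D, 0 < τt k := by
    intro k hk
    rcases Nat.eq_zero_or_pos k with h | h
    · rw [h]; exact hτt0pos
    · exact hτtkpos k (by simp [hsdef, Finset.mem_Icc]; omega)
  refine ⟨?_, hTsum, hτtpos, ?_⟩
  · -- uniqueness
    intro T' hT' heq'
    have hT'eq := hform T' hT' heq'
    by_contra hne
    rcases lt_or_gt_of_ne hne with h | h
    · exact uniq M hM s α hα T' Tt hT' h hT'eq hTteq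
    · exact uniq M hM s α hα Tt T' hTt h hTteq hT'eq
  · -- maximality
    intro τ hτ
    set T : ℝ := Tsum D τ with hTdef
    have hTpos : 0 < T := by
      rw [hTdef, Tsum]
      apply Finset.sum_pos
      · intro k hk
        exact hτ k (Finset.mem_range.mp hk)
      · exact ⟨0, Finset.mem_range.mpr (by omega)⟩
    -- exp evaluations at τt
    have hE0 : Real.exp ((M+1) * τt 0) = (M+1)*Tt + 1 := by
      rw [hτ0, show (M+1) * ((1/(M+1)) * Real.log ((M+1)*Tt+1)) =
        Real.log ((M+1)*Tt+1) by field_simp]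
      exact Real.exp_log hA
    have hEk : ∀ k ∈ s, Real.exp (α k * τt k) = (M*Tt+1)/((M - α k)*Tt+1) := by
      intro k hk
      have hα0 : (0:ℝ) < α k := by linarith [(hα k hk).1]
      rw [hτk k hk, show α k * ((1/α k) * Real.log ((M*Tt+1)/((M - α k)*Tt+1))) =
        Real.log ((M*Tt+1)/((M - α k)*Tt+1)) by field_simp]
      exact Real.exp_log (div_pos hN (hB k hk).1)
    -- pointwise bounds
    have hbound : ∀ k ∈ Finset.range D,
        cfun m α k (τ k) ≤ cfun m α k (τt k) * (τ k / τt k) ^ (τt k / Tt) := by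
      intro k hk
      have hkD : k < D := Finset.mem_range.mp hk
      have hτkpos := hτ k hkD
      rcases Nat.eq_zero_or_pos k with h | h
      · subst h
        simp only [cfun, if_pos]
        have := case0 M Tt (τt 0) hM1 hTt hτt0pos hE0 (τ 0) hτkpos
        calc (1/(M+1)) * (1 - Real.exp (-(M+1) * τ 0))
            ≤ (1/(M+1)) * ((1 - Real.exp (-(M+1) * τt 0)) * (τ 0 / τt 0) ^ (τt 0 / Tt)) := by
              apply mul_le_mul_of_nonneg_left this (by positivity)
          _ = (1/(M+1)) * (1 - Real.exp (-(M+1) * τt 0)) * (τ 0 / τt 0) ^ (τt 0 / Tt) := by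
              ring
      · have hks : k ∈ s := by simp [hsdef, Finset.mem_Icc]; omega
        have hkne : k ≠ 0 := by omega
        simp only [cfun, if_neg hkne]
        exact casek M (α k) Tt (τt k) (hα k hks).1 (hα k hks).2 hTt
          (hτtkpos k hks) (hEk k hks) (τ k) hτkpos
    -- positivity of cfun values
    have hcfunpos : ∀ (σ : ℕ → ℝ), (∀ k < D, 0 < σ k) → ∀ k ∈ Finset.range D,
        0 < cfun m α k (σ k) := by
      intro σ hσ k hk
      have hkD : k < D := Finset.mem_range.mp hk
      have hσk := hσ k hkD
      rcases Nat.eq_zero_or_pos k with h | h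
      · subst h
        simp only [cfun, if_pos]
        have : Real.exp (-(M+1) * σ 0) < 1 := by
          rw [Real.exp_lt_one_iff]; nlinarith
        have h2 : (0:ℝ) < 1/(M+1) := by positivity
        nlinarith
      · have hks : k ∈ s := by simp [hsdef, Finset.mem_Icc]; omega
        have hkne : k ≠ 0 := by omega
        simp only [cfun, if_neg hkne]
        have hα0 : (0:ℝ) < α k := by linarith [(hα k hks).1]
        have := exp_sub_one_pos (show 0 < α k * σ k by positivity)
        positivity
    -- AM-GM
    have hwsum : ∑ k ∈ Finset.range D, τt k / Tt = 1 := by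
      rw [← Finset.sum_div]
      rw [show ∑ k ∈ Finset.range D, τt k = Tt from hTsum]
      exact div_self hTt.ne'
    have hamgm : ∏ k ∈ Finset.range D, (τ k / τt k) ^ (τt k / Tt) ≤ T / Tt := by
      have h1 := Real.geom_mean_le_arith_mean_weighted (Finset.range D)
        (fun k => τt k / Tt) (fun k => τ k / τt k)
        (fun k hk => le_of_lt (div_pos (hτtpos k (Finset.mem_range.mp hk)) hTt))
        hwsum
        (fun k hk => le_of_lt (div_pos (hτ k (Finset.mem_range.mp hk))
          (hτtpos k (Finset.mem_range.mp hk))))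
      calc ∏ k ∈ Finset.range D, (τ k / τt k) ^ (τt k / Tt)
          ≤ ∑ k ∈ Finset.range D, (τt k / Tt) * (τ k / τt k) := h1
        _ = ∑ k ∈ Finset.range D, τ k / Tt := by
            apply Finset.sum_congr rfl
            intro k hk
            have h2 := (hτtpos k (Finset.mem_range.mp hk)).ne'
            field_simp
        _ = T / Tt := by rw [← Finset.sum_div, hTdef, Tsum]
    -- combine
    have hmain : cprod m D α τ ≤ cprod m D α τt * (T / Tt) := by
      calc cprod m D α τ = ∏ k ∈ Finset.range D, cfun m α k (τ k) := rfl
        _ ≤ ∏ k ∈ Finset.range D, (cfun m α k (τt k) * (τ k / τt k) ^ (τt k / Tt)) := by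
            apply Finset.prod_le_prod
            · intro k hk
              exact (hcfunpos τ hτ k hk).le
            · exact hbound
        _ = (∏ k ∈ Finset.range D, cfun m α k (τt k)) *
              ∏ k ∈ Finset.range D, (τ k / τt k) ^ (τt k / Tt) := Finset.prod_mul_distrib
        _ ≤ cprod m D α τt * (T / Tt) := by
            apply mul_le_mul_of_nonneg_left hamgm
            exact Finset.prod_nonneg fun k hk => (hcfunpos τt hτtpos k hk).le
    rw [hTsum]
    rw [div_le_div_iff₀ hTpos hTt]
    have h3 : cprod m D α τt * (T / Tt) * Tt = cprod m D α τt * T := by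
      field_simp
    nlinarith [hmain, mul_le_mul_of_nonneg_right hmain hTt.le]
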